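/- The block Cimmino error satisfies x̄(t+1) − x* = (I_n − ν m X)(x̄(t) − x*) for all t. Moreover, if X is positive definite with smallest and largest eigenvalues μ_min and μ_max and κ = μ_max/μ_min, then choosing ν = 2/(m(μ_max + μ_min)) gives ‖x̄(t) − x*‖ ≤ ((κ−1)/(κ+1))^t ‖x̄(0) − x*‖ for all t ≥ 0. -/

import Mathlib

open Matrix

private lemma unitary_dot' {n : ℕ} (U : Matrix (Fin n) (Fin n) ℝ) (hU : star U * U = 1)
    (z : Fin n → ℝ) : (U *ᵥ z) ⬝ᵥ (U *ᵥ z) = z ⬝ᵥ z := by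
  rw [Matrix.dotProduct_mulVec, ← Matrix.mulVec_transpose, Matrix.mulVec_mulVec]
  rw [show Uᵀ * U = 1 from by simpa [Matrix.star_eq_conjTranspose, Matrix.conjTranspose_eq_transpose_of_trivial] using hU]
  simp

private lemma key_bound' {n : ℕ} (X : Matrix (Fin n) (Fin n) ℝ) (hH : X.IsHermitian) (c ρ : ℝ)
    (hb : ∀ i, |1 - c * hH.eigenvalues i| ≤ ρ) (v : Fin n → ℝ) :
    ((1 - c • X) *ᵥ v) ⬝ᵥ ((1 - c • X) *ᵥ v) ≤ ρ ^ 2 * (v ⬝ᵥ v) := by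
  set U : Matrix (Fin n) (Fin n) ℝ := (hH.eigenvectorUnitary : Matrix (Fin n) (Fin n) ℝ) with hUdef
  have hU1 : star U * U = 1 := (Matrix.mem_unitaryGroup_iff').mp hH.eigenvectorUnitary.2
  have hU2 : U * star U = 1 := (Matrix.mem_unitaryGroup_iff).mp hH.eigenvectorUnitary.2
  have hspec : X = U * diagonal (RCLike.ofReal ∘ hH.eigenvalues) * star U := hH.spectral_theorem
  have hdiag : diagonal (RCLike.ofReal ∘ hH.eigenvalues) = diagonal hH.eigenvalues := by congr 1
  have e1 : (diagonal fun i => 1 - c * hH.eigenvalues i)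
      = (1 : Matrix (Fin n) (Fin n) ℝ) - c • diagonal hH.eigenvalues := by
    ext i j
    by_cases h : i = j <;>
      simp [Matrix.diagonal_apply, Matrix.one_apply, Matrix.sub_apply, h]
  have hM : (1 : Matrix (Fin n) (Fin n) ℝ) - c • X
      = U * diagonal (fun i => 1 - c * hH.eigenvalues i) * star U := by
    calc (1 : Matrix (Fin n) (Fin n) ℝ) - c • X
        = 1 - c • (U * diagonal hH.eigenvalues * star U) := by rw [← hdiag, ← hspec]
      _ = U * diagonal (fun i => 1 - c * hH.eigenvalues i) * star U := by
          rw [e1]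
          simp only [Matrix.mul_sub, Matrix.sub_mul, mul_one, one_mul, Matrix.mul_smul,
            Matrix.smul_mul, hU2, mul_assoc]
  rw [hM, ← Matrix.mulVec_mulVec, ← Matrix.mulVec_mulVec, unitary_dot' U hU1]
  set w := star U *ᵥ v with hw
  have hwv : w ⬝ᵥ w = v ⬝ᵥ v := by
    have := unitary_dot' (star U) (by rwa [star_star]) v
    simpa using this
  rw [← hwv]
  simp only [Matrix.mulVec_diagonal, dotProduct, Finset.mul_sum]
  apply Finset.sum_le_sum
  intro i _
  have h1 := abs_le.mp (hb i)
  calc (1 - c * hH.eigenvalues i) * w i * ((1 - c * hH.eigenvalues i) * w i)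
      = (1 - c * hH.eigenvalues i) ^ 2 * (w i * w i) := by ring
    _ ≤ ρ ^ 2 * (w i * w i) :=
        mul_le_mul_of_nonneg_right (sq_le_sq' h1.1 h1.2) (mul_self_nonneg _)

private lemma sum_mulVec' {m n n' : ℕ} (M : Fin m → Matrix (Fin n) (Fin n') ℝ)
    (v : Fin n' → ℝ) : (∑ i, M i) *ᵥ v = ∑ i, M i *ᵥ v := by
  ext j
  simp only [Matrix.mulVec, dotProduct, Finset.sum_apply, Finset.sum_mul,
    Matrix.sum_apply]
  rw [Finset.sum_comm]

theorem block_cimmino_error_and_rate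
    {n p m : ℕ}
    (A : Fin m → Matrix (Fin p) (Fin n) ℝ)
    (b : Fin m → Fin p → ℝ)
    (hfr : ∀ i, Invertible (A i * (A i)ᵀ))
    (xstar : Fin n → ℝ)
    (hsol : ∀ i, (A i).mulVec xstar = b i)
    (huniq : ∀ y : Fin n → ℝ, (∀ i, (A i).mulVec y = b i) → y = xstar)
    (X : Matrix (Fin n) (Fin n) ℝ)
    (hX : X = ((m : ℝ))⁻¹ • ∑ i, (A i)ᵀ * (A i * (A i)ᵀ)⁻¹ * A i)
    (ν : ℝ)
    (xbar : ℕ → Fin n → ℝ)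
    (hiter : ∀ t, xbar (t + 1) = xbar t
        + ν • ∑ i, ((A i)ᵀ * (A i * (A i)ᵀ)⁻¹).mulVec (b i - (A i).mulVec (xbar t))) :
    (∀ t, xbar (t + 1) - xstar
        = ((1 : Matrix (Fin n) (Fin n) ℝ) - (ν * m) • X).mulVec (xbar t - xstar)) ∧
    (∀ (μmin μmax κ : ℝ), X.PosDef →
        μmin ∈ spectrum ℝ X → μmax ∈ spectrum ℝ X →
        (∀ μ ∈ spectrum ℝ X, μmin ≤ μ ∧ μ ≤ μmax) →
        κ = μmax / μmin →
        ν = 2 / (m * (μmax + μmin)) →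
        ∀ t : ℕ,
          Real.sqrt ((xbar t - xstar) ⬝ᵥ (xbar t - xstar))
            ≤ ((κ - 1) / (κ + 1)) ^ t * Real.sqrt ((xbar 0 - xstar) ⬝ᵥ (xbar 0 - xstar))) := by
  set S : Matrix (Fin n) (Fin n) ℝ := ∑ i, (A i)ᵀ * (A i * (A i)ᵀ)⁻¹ * A i with hS
  have part1 : ∀ t, xbar (t + 1) - xstar
      = ((1 : Matrix (Fin n) (Fin n) ℝ) - (ν * m) • X).mulVec (xbar t - xstar) := by
    intro t
    have hsum : (∑ i, ((A i)ᵀ * (A i * (A i)ᵀ)⁻¹) *ᵥ (b i - A i *ᵥ xbar t))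
        = S *ᵥ (xstar - xbar t) := by
      rw [hS, sum_mulVec']
      refine Finset.sum_congr rfl fun i _ => ?_
      rw [← hsol i, ← Matrix.mulVec_sub, Matrix.mulVec_mulVec]
    have hXS : ((ν * m) • X) *ᵥ (xbar t - xstar) = ν • (S *ᵥ (xbar t - xstar)) := by
      rw [hX, smul_smul, Matrix.smul_mulVec]
      by_cases hm : (m : ℝ) = 0
      · have hm0 : m = 0 := Nat.cast_eq_zero.mp hm
        subst hm0
        have : S = 0 := by simp [hS]
        simp [this]
      · rw [mul_assoc, mul_inv_cancel₀ hm, mul_one]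
    rw [hiter t, hsum, Matrix.sub_mulVec, Matrix.one_mulVec, hXS,
      show xstar - xbar t = -(xbar t - xstar) by abel, Matrix.mulVec_neg, smul_neg]
    abel
  refine ⟨part1, ?_⟩
  intro μmin μmax κ hPD hmin hmax hband hκ hν
  -- eigenvector for μmin
  obtain ⟨v, hv0, hvX⟩ : ∃ v, v ≠ 0 ∧ X *ᵥ v = μmin • v := by
    have h1 : ¬IsUnit (algebraMap ℝ (Matrix (Fin n) (Fin n) ℝ) μmin - X) :=
      spectrum.mem_iff.mp hmin
    have h2 : (algebraMap ℝ (Matrix (Fin n) (Fin n) ℝ) μmin - X).det = 0 := by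
      by_contra h
      exact h1 ((Matrix.isUnit_iff_isUnit_det _).mpr (isUnit_iff_ne_zero.mpr h))
    obtain ⟨v, hv, hveq⟩ := (Matrix.exists_mulVec_eq_zero_iff).mpr h2
    refine ⟨v, hv, ?_⟩
    rw [Matrix.sub_mulVec] at hveq
    have halg : (algebraMap ℝ (Matrix (Fin n) (Fin n) ℝ) μmin) *ᵥ v = μmin • v := by
      rw [Algebra.algebraMap_eq_smul_one, Matrix.smul_mulVec, Matrix.one_mulVec]
    rw [halg] at hveq
    exact (sub_eq_zero.mp hveq).symm
  have hvv0 : v ⬝ᵥ v ≠ 0 := fun h => hv0 (dotProduct_self_eq_zero.mp h)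
  have hvvnn : 0 ≤ v ⬝ᵥ v := by
    simp only [dotProduct]
    exact Finset.sum_nonneg fun i _ => mul_self_nonneg (v i)
  have hvv : 0 < v ⬝ᵥ v := lt_of_le_of_ne hvvnn (Ne.symm hvv0)
  have hμpos : 0 < μmin := by
    have hq := hPD.dotProduct_mulVec_pos hv0
    rw [hvX] at hq
    have hq' : (0:ℝ) < μmin * (v ⬝ᵥ v) := by
      simpa [dotProduct_smul, smul_dotProduct, smul_eq_mul,
        dotProduct_comm] using hq
    nlinarith
  have hm0 : (m : ℝ) ≠ 0 := by
    intro h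
    have hm' : m = 0 := Nat.cast_eq_zero.mp h
    have hX0 : X = 0 := by
      subst hm'
      rw [hX]
      simp
    rw [hX0] at hvX
    simp only [Matrix.zero_mulVec] at hvX
    rcases smul_eq_zero.mp hvX.symm with h | h
    · exact (ne_of_gt hμpos) h
    · exact hv0 h
  have hmaxmin : μmin ≤ μmax := (hband μmax hmax).1
  have hs : 0 < μmax + μmin := by linarith
  have hc : ν * m = 2 / (μmax + μmin) := by
    rw [hν]
    field_simp
  set ρ : ℝ := (κ - 1) / (κ + 1) with hρdef
  have hρ : ρ = (μmax - μmin) / (μmax + μmin) := by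
    have h1 : κ - 1 = (μmax - μmin) / μmin := by rw [hκ]; field_simp
    have h2 : κ + 1 = (μmax + μmin) / μmin := by rw [hκ]; field_simp
    rw [hρdef, h1, h2,
      div_eq_div_iff (ne_of_gt (div_pos hs hμpos)) (ne_of_gt hs)]
    field_simp
  have hρ0 : 0 ≤ ρ := by
    rw [hρ]
    apply div_nonneg <;> linarith
  have hband' : ∀ i, |1 - (ν * m) * hPD.1.eigenvalues i| ≤ ρ := by
    intro i
    have hi := hband _ (hPD.1.eigenvalues_mem_spectrum_real i)
    rw [hc, hρ, abs_le]
    have he : 1 - 2 / (μmax + μmin) * hPD.1.eigenvalues i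
        = (μmax + μmin - 2 * hPD.1.eigenvalues i) / (μmax + μmin) := by
      field_simp
    rw [he]
    constructor
    · rw [neg_div', div_le_div_iff_of_pos_right hs]
      linarith [hi.1]
    · rw [div_le_div_iff_of_pos_right hs]
      linarith [hi.2]
  have hstep : ∀ t, Real.sqrt ((xbar (t+1) - xstar) ⬝ᵥ (xbar (t+1) - xstar))
      ≤ ρ * Real.sqrt ((xbar t - xstar) ⬝ᵥ (xbar t - xstar)) := by
    intro t
    rw [part1 t]
    have hk := key_bound' X hPD.1 (ν * m) ρ hband' (xbar t - xstar)
    calc Real.sqrt ((((1 : Matrix (Fin n) (Fin n) ℝ) - (ν * m) • X) *ᵥ (xbar t - xstar)) ⬝ᵥ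
            (((1 : Matrix (Fin n) (Fin n) ℝ) - (ν * m) • X) *ᵥ (xbar t - xstar)))
        ≤ Real.sqrt (ρ ^ 2 * ((xbar t - xstar) ⬝ᵥ (xbar t - xstar))) := Real.sqrt_le_sqrt hk
      _ = ρ * Real.sqrt ((xbar t - xstar) ⬝ᵥ (xbar t - xstar)) := by
          rw [Real.sqrt_mul (sq_nonneg ρ), Real.sqrt_sq hρ0]
  intro t
  induction t with
  | zero => simp
  | succ t ih =>
      calc Real.sqrt ((xbar (t+1) - xstar) ⬝ᵥ (xbar (t+1) - xstar))
          ≤ ρ * Real.sqrt ((xbar t - xstar) ⬝ᵥ (xbar t - xstar)) := hstep t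
        _ ≤ ρ * (ρ ^ t * Real.sqrt ((xbar 0 - xstar) ⬝ᵥ (xbar 0 - xstar))) :=
            mul_le_mul_of_nonneg_left ih hρ0
        _ = ρ ^ (t+1) * Real.sqrt ((xbar 0 - xstar) ⬝ᵥ (xbar 0 - xstar)) := by ring
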